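/- Suppose: (i) for every t ∈ {1, …, T} and every x ∈ D, |f(x) − m_t(x)| ≤ √(β_t) · √(σ_{g,N}²(x) + σ_{δ,t−1}²(x)); (ii) for every t, the query point x_t maximizes x ↦ m_t(x) + √(β_t) · √(σ_{g,N}²(x) + σ_{δ,t−1}²(x)) over D; (iii) there is γ_g ≥ 0 with 2γ_g < N such that for every x ∈ D, ∑_{i=1}^N log(1 + σ_0^{-2} σ_{g,i−1}²(x)) ≤ 2γ_g; and (iv) there is γ_δ ≥ 0 such that ∑_{t=1}^T log(1 + σ_{δ,t−1}²(x_t) / (σ_{g,N}²(x_t) + σ²)) ≤ 2γ_δ. Then the cumulative regret satisfies R_T := ∑_{t=1}^T (f(x*) − f(x_t)) ≤ √( 8 T β_T ( T γ_g σ_0² / (N − 2γ_g) + C_2 γ_δ ( 2 γ_g σ_0² / (N − 2γ_g) + σ² ) ) ). -/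

import Mathlib

open Matrix Finset

/-- The `n × n` kernel matrix `[κ(x_i, x_j)]` built from the first `n` points of
the sequence `xs` (zero-indexed: `xs 0 = x_1`). -/
noncomputable def kerMat {D : Type*} (κ : D → D → ℝ) (xs : ℕ → D) (n : ℕ) :
    Matrix (Fin n) (Fin n) ℝ :=
  Matrix.of fun i j => κ (xs i) (xs j)

/-- The kernel vector `k_n(x) = [κ(x_i, x)]_{i=1}^n`. -/
noncomputable def kerVec {D : Type*} (κ : D → D → ℝ) (xs : ℕ → D) (n : ℕ) (y : D) :
    Fin n → ℝ :=
  fun i => κ (xs i) y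

/-- Posterior variance with (possibly point-dependent) noise variance `ν`:
`κ(x,x) − k_n(x)ᵀ (K_n + ν(x) I_n)⁻¹ k_n(x)`. -/
noncomputable def postVarNoise {D : Type*} (κ : D → D → ℝ) (xs : ℕ → D)
    (ν : D → ℝ) (n : ℕ) (y : D) : ℝ :=
  κ y y -
    kerVec κ xs n y ⬝ᵥ
      ((kerMat κ xs n + ν y • (1 : Matrix (Fin n) (Fin n) ℝ))⁻¹ *ᵥ kerVec κ xs n y)

/-- Source posterior variance `σ_{g,i}²(x)` after `i` source observations with
noise variance `σ_0²`. -/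
noncomputable def sigmaG {D : Type*} (k_g : D → D → ℝ) (x0 : ℕ → D) (σ0 : ℝ)
    (i : ℕ) (x : D) : ℝ :=
  postVarNoise k_g x0 (fun _ => σ0 ^ 2) i x

/-- Difference posterior variance `σ_{δ,t}²(x)` after `t` target observations,
with heteroscedastic noise variance `σ_{g,N}²(x) + σ²`. -/
noncomputable def sigmaD {D : Type*} (k_g k_δ : D → D → ℝ) (x0 xq : ℕ → D)
    (σ0 σ : ℝ) (N t : ℕ) (x : D) : ℝ :=
  postVarNoise k_δ xq (fun y => sigmaG k_g x0 σ0 N y + σ ^ 2) t x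

/-- The constant `C_2 = (τ²/σ²) / log(1 + τ²/σ²)`. -/
noncomputable def Ctwo (σ τ : ℝ) : ℝ :=
  (τ ^ 2 / σ ^ 2) / Real.log (1 + τ ^ 2 / σ ^ 2)

/-- The quadratic objective whose minimum is the posterior variance. -/
noncomputable def quadQ {D : Type*} (κ : D → D → ℝ) (xs : ℕ → D) (ν : ℝ) (n : ℕ)
    (y : D) (w : Fin n → ℝ) : ℝ :=
  κ y y - 2 * (w ⬝ᵥ kerVec κ xs n y) +
    w ⬝ᵥ ((kerMat κ xs n + ν • (1 : Matrix (Fin n) (Fin n) ℝ)) *ᵥ w)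

section MatrixAux
variable {D : Type*} {κ : D → D → ℝ} {xs : ℕ → D} {n : ℕ} {ν : ℝ} {y : D}

lemma kerMat_herm (hsymm : ∀ a b, κ a b = κ b a) :
    (kerMat κ xs n).IsHermitian := by
  show _ = _
  ext i j
  simp [kerMat, Matrix.conjTranspose_apply, hsymm (xs i) (xs j)]

lemma noisy_herm (hsymm : ∀ a b, κ a b = κ b a) :
    (kerMat κ xs n + ν • (1 : Matrix (Fin n) (Fin n) ℝ)).IsHermitian := by
  refine (kerMat_herm hsymm).add ?_
  show _ = _
  ext i j
  simp [Matrix.conjTranspose_apply, Matrix.one_apply, eq_comm]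

lemma noisy_posDef (hpsd : (kerMat κ xs n).PosSemidef) (hsymm : ∀ a b, κ a b = κ b a)
    (hν : 0 < ν) :
    (kerMat κ xs n + ν • (1 : Matrix (Fin n) (Fin n) ℝ)).PosDef := by
  refine posDef_iff_dotProduct_mulVec.mpr ⟨noisy_herm hsymm, fun x hx => ?_⟩
  have h1 := hpsd.dotProduct_mulVec_nonneg x
  have h2 : (0:ℝ) < x ⬝ᵥ x := by
    have hnn : (0:ℝ) ≤ x ⬝ᵥ x := Finset.sum_nonneg fun i _ => mul_self_nonneg _
    rcases hnn.lt_or_eq with h | h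
    · exact h
    · exact absurd (dotProduct_self_eq_zero.mp h.symm) hx
  have : x ⬝ᵥ (kerMat κ xs n + ν • (1 : Matrix (Fin n) (Fin n) ℝ)) *ᵥ x
      = x ⬝ᵥ kerMat κ xs n *ᵥ x + ν * (x ⬝ᵥ x) := by
    rw [Matrix.add_mulVec, dotProduct_add, Matrix.smul_mulVec, Matrix.one_mulVec,
      dotProduct_smul, smul_eq_mul]
  simp only [star_trivial] at h1 ⊢
  rw [this]
  have := mul_pos hν h2
  linarith

lemma noisy_symm_dot (hsymm : ∀ a b, κ a b = κ b a) (v w : Fin n → ℝ) :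
    v ⬝ᵥ ((kerMat κ xs n + ν • (1 : Matrix (Fin n) (Fin n) ℝ)) *ᵥ w)
      = ((kerMat κ xs n + ν • (1 : Matrix (Fin n) (Fin n) ℝ)) *ᵥ v) ⬝ᵥ w := by
  rw [dotProduct_mulVec, ← Matrix.mulVec_transpose]
  congr 1
  exact congrFun (congrArg _ ((noisy_herm (n := n) (ν := ν) hsymm).eq)) v

end MatrixAux
open Matrix Finset

section MatrixAux2
variable {D : Type*} {κ : D → D → ℝ} {xs : ℕ → D} {n : ℕ} {ν : ℝ} {y : D}

lemma wstar_spec (hpsd : (kerMat κ xs n).PosSemidef) (hsymm : ∀ a b, κ a b = κ b a)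
    (hν : 0 < ν) :
    (kerMat κ xs n + ν • (1 : Matrix (Fin n) (Fin n) ℝ)) *ᵥ
      ((kerMat κ xs n + ν • (1 : Matrix (Fin n) (Fin n) ℝ))⁻¹ *ᵥ kerVec κ xs n y)
      = kerVec κ xs n y := by
  rw [Matrix.mulVec_mulVec, Matrix.mul_nonsing_inv, Matrix.one_mulVec]
  exact (Matrix.isUnit_iff_isUnit_det _).mp (noisy_posDef hpsd hsymm hν).isUnit

/-- The posterior variance equals the quadratic objective at the optimum. -/
lemma postVar_eq_quad (hpsd : (kerMat κ xs n).PosSemidef) (hsymm : ∀ a b, κ a b = κ b a)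
    {νf : D → ℝ} (hν : 0 < νf y) :
    postVarNoise κ xs νf n y =
      quadQ κ xs (νf y) n y
        ((kerMat κ xs n + νf y • (1 : Matrix (Fin n) (Fin n) ℝ))⁻¹ *ᵥ kerVec κ xs n y) := by
  set M := kerMat κ xs n + νf y • (1 : Matrix (Fin n) (Fin n) ℝ) with hM
  set b := kerVec κ xs n y with hb
  have hMw : M *ᵥ (M⁻¹ *ᵥ b) = b := wstar_spec hpsd hsymm hν
  rw [postVarNoise, quadQ, ← hM, ← hb, hMw]
  rw [dotProduct_comm b (M⁻¹ *ᵥ b)]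
  ring

/-- The quadratic objective at the optimum is a lower bound for its value anywhere. -/
lemma postVar_le_quad (hpsd : (kerMat κ xs n).PosSemidef) (hsymm : ∀ a b, κ a b = κ b a)
    {νf : D → ℝ} (hν : 0 < νf y) (w : Fin n → ℝ) :
    postVarNoise κ xs νf n y ≤ quadQ κ xs (νf y) n y w := by
  rw [postVar_eq_quad hpsd hsymm hν]
  simp only [quadQ]
  set M := kerMat κ xs n + νf y • (1 : Matrix (Fin n) (Fin n) ℝ) with hMdef
  set b := kerVec κ xs n y with hb
  set ws := M⁻¹ *ᵥ b with hws
  have hMw : M *ᵥ ws = b := wstar_spec hpsd hsymm hν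
  have hpos : (0:ℝ) ≤ (w - ws) ⬝ᵥ (M *ᵥ (w - ws)) := by
    have := (noisy_posDef hpsd hsymm hν).posSemidef.dotProduct_mulVec_nonneg (w - ws)
    simpa [star_trivial] using this
  have hexp : (w - ws) ⬝ᵥ (M *ᵥ (w - ws))
      = w ⬝ᵥ (M *ᵥ w) - 2 * (w ⬝ᵥ b) + ws ⬝ᵥ b := by
    have h1 : ws ⬝ᵥ (M *ᵥ w) = w ⬝ᵥ b := by
      rw [noisy_symm_dot hsymm, hMw, dotProduct_comm]
    have h2 : w ⬝ᵥ (M *ᵥ ws) = w ⬝ᵥ b := by rw [hMw]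
    have h3 : ws ⬝ᵥ (M *ᵥ ws) = ws ⬝ᵥ b := by rw [hMw]
    rw [Matrix.mulVec_sub, dotProduct_sub, sub_dotProduct, sub_dotProduct, h1, h2, h3]
    ring
  rw [hMw]
  linarith [hpos.trans_eq hexp]
end MatrixAux2

section MatrixAux3
variable {D : Type*} {κ : D → D → ℝ} {xs : ℕ → D} {n : ℕ} {ν : ℝ} {y : D}

lemma quad_nonneg
    (hpsd : ∀ (m : ℕ) (z : Fin m → D), (Matrix.of fun i j => κ (z i) (z j)).PosSemidef)
    (hsymm : ∀ a b, κ a b = κ b a) (hν : 0 ≤ ν) (w : Fin n → ℝ) :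
    0 ≤ quadQ κ xs ν n y w := by
  set z : Fin (n+1) → D := Fin.snoc (fun i : Fin n => xs i) y with hz
  set v : Fin (n+1) → ℝ := Fin.snoc w (-1) with hv
  have h0 := (hpsd (n+1) z).dotProduct_mulVec_nonneg v
  simp only [star_trivial] at h0
  have hrow : ∀ j : Fin n, κ y (xs j) = κ (xs j) y := fun j => hsymm y (xs j)
  have hval : v ⬝ᵥ ((Matrix.of fun i j => κ (z i) (z j)) *ᵥ v)
      = w ⬝ᵥ (kerMat κ xs n *ᵥ w) - 2 * (w ⬝ᵥ kerVec κ xs n y) + κ y y := by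
    simp only [dotProduct, mulVec, kerMat, kerVec, Matrix.of_apply, hz, hv,
      Fin.sum_univ_castSucc, Fin.snoc_castSucc, Fin.snoc_last, hrow]
    simp only [Finset.mul_sum, Finset.sum_add_distrib, mul_add, mul_neg, mul_one, neg_mul,
      one_mul, neg_neg, Finset.sum_neg_distrib]
    ring_nf
    rw [Finset.sum_comm]
    ring_nf
    have hc : ∑ x : Fin n, κ (xs x) y * w x = ∑ x : Fin n, w x * κ (xs x) y :=
      Finset.sum_congr rfl fun x _ => mul_comm _ _
    have h2 : ∑ x : Fin n, 2 * w x * κ (xs x) y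
        = ∑ x : Fin n, w x * κ (xs x) y + ∑ x : Fin n, w x * κ (xs x) y := by
      rw [← Finset.sum_add_distrib]
      exact Finset.sum_congr rfl fun x _ => by ring
    rw [hc, ← Finset.sum_mul]
    ring
  have hww : (0:ℝ) ≤ w ⬝ᵥ w := Finset.sum_nonneg fun i _ => mul_self_nonneg _
  have hexp : quadQ κ xs ν n y w
      = κ y y - 2 * (w ⬝ᵥ kerVec κ xs n y) + w ⬝ᵥ (kerMat κ xs n *ᵥ w) + ν * (w ⬝ᵥ w) := by
    rw [quadQ, Matrix.add_mulVec, dotProduct_add, Matrix.smul_mulVec,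
      Matrix.one_mulVec, dotProduct_smul, smul_eq_mul]
    ring
  rw [hexp]
  nlinarith [mul_nonneg hν hww, hval ▸ h0]
end MatrixAux3

section MatrixAux4
variable {D : Type*} {κ : D → D → ℝ} {xs : ℕ → D} {ν : ℝ} {y : D}

lemma sum_pad {i n : ℕ} (hi : i ≤ n) (w : Fin i → ℝ) (f : Fin n → ℝ) :
    ∑ j : Fin n, (if h : (j:ℕ) < i then w ⟨j, h⟩ else 0) * f j
      = ∑ k : Fin i, w k * f (Fin.castLE hi k) := by
  rw [show (Finset.univ : Finset (Fin i)) = Finset.univ from rfl]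
  have hmap : ∑ j ∈ Finset.univ.map (Fin.castLEEmb hi),
      (if h : (j:ℕ) < i then w ⟨j, h⟩ else 0) * f j
      = ∑ k : Fin i, w k * f (Fin.castLE hi k) := by
    rw [Finset.sum_map]
    refine Finset.sum_congr rfl fun k _ => ?_
    have hk : ((Fin.castLEEmb hi k : Fin n) : ℕ) < i := by simp [k.isLt]
    rw [dif_pos hk]
    congr 1
  rw [← hmap]
  refine (Finset.sum_subset (Finset.subset_univ _) fun j _ hj => ?_).symm
  have : ¬ ((j:ℕ) < i) := by
    intro hlt
    exact hj (Finset.mem_map.mpr ⟨⟨(j:ℕ), hlt⟩, Finset.mem_univ _, by ext; simp⟩)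
  rw [dif_neg this, zero_mul]

lemma quad_pad (hsymm : ∀ a b, κ a b = κ b a) {i n : ℕ} (hi : i ≤ n) (w : Fin i → ℝ) :
    quadQ κ xs ν n y (fun j => if h : (j:ℕ) < i then w ⟨j, h⟩ else 0)
      = quadQ κ xs ν i y w := by
  set wp : Fin n → ℝ := fun j => if h : (j:ℕ) < i then w ⟨j, h⟩ else 0 with hwp
  have hvec : wp ⬝ᵥ kerVec κ xs n y = w ⬝ᵥ kerVec κ xs i y := by
    rw [dotProduct, dotProduct]
    exact sum_pad hi w _
  have hentry : ∀ (k l : Fin i),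
      (kerMat κ xs n + ν • (1 : Matrix (Fin n) (Fin n) ℝ)) (Fin.castLE hi k) (Fin.castLE hi l)
      = (kerMat κ xs i + ν • (1 : Matrix (Fin i) (Fin i) ℝ)) k l := by
    intro k l
    simp [kerMat, Matrix.add_apply, Matrix.smul_apply, Matrix.one_apply,
      Fin.castLE_inj]
  have hmv : ∀ k : Fin i,
      ((kerMat κ xs n + ν • (1 : Matrix (Fin n) (Fin n) ℝ)) *ᵥ wp) (Fin.castLE hi k)
        = ((kerMat κ xs i + ν • (1 : Matrix (Fin i) (Fin i) ℝ)) *ᵥ w) k := by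
    intro k
    rw [mulVec, mulVec, dotProduct, dotProduct]
    rw [Finset.sum_congr rfl fun j _ => mul_comm
      ((kerMat κ xs n + ν • (1 : Matrix (Fin n) (Fin n) ℝ)) (Fin.castLE hi k) j) (wp j)]
    rw [sum_pad hi w _]
    exact Finset.sum_congr rfl fun l _ => by rw [hentry k l, mul_comm]
  have hquad : wp ⬝ᵥ ((kerMat κ xs n + ν • (1 : Matrix (Fin n) (Fin n) ℝ)) *ᵥ wp)
      = w ⬝ᵥ ((kerMat κ xs i + ν • (1 : Matrix (Fin i) (Fin i) ℝ)) *ᵥ w) := by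
    rw [dotProduct, dotProduct, sum_pad hi w _]
    exact Finset.sum_congr rfl fun k _ => by rw [hmv k]
  rw [quadQ, quadQ, hvec, hquad]

lemma postVar_mono
    (hpsd : ∀ (m : ℕ) (z : Fin m → D), (Matrix.of fun i j => κ (z i) (z j)).PosSemidef)
    (hsymm : ∀ a b, κ a b = κ b a) (hν : 0 < ν) {i n : ℕ} (hi : i ≤ n) :
    postVarNoise κ xs (fun _ => ν) n y ≤ postVarNoise κ xs (fun _ => ν) i y := by
  set ws := (kerMat κ xs i + ν • (1 : Matrix (Fin i) (Fin i) ℝ))⁻¹ *ᵥ kerVec κ xs i y with hws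
  calc postVarNoise κ xs (fun _ => ν) n y
      ≤ quadQ κ xs ν n y (fun j => if h : (j:ℕ) < i then ws ⟨j, h⟩ else 0) :=
        postVar_le_quad (νf := fun _ => ν) (hpsd n (fun j : Fin n => xs j)) hsymm hν _
    _ = quadQ κ xs ν i y ws := quad_pad hsymm hi ws
    _ = postVarNoise κ xs (fun _ => ν) i y :=
        (postVar_eq_quad (νf := fun _ => ν) (hpsd i (fun j : Fin i => xs j)) hsymm hν).symm

lemma postVar_nonneg
    (hpsd : ∀ (m : ℕ) (z : Fin m → D), (Matrix.of fun i j => κ (z i) (z j)).PosSemidef)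
    (hsymm : ∀ a b, κ a b = κ b a) {n : ℕ} {νf : D → ℝ} (hν : 0 < νf y) :
    0 ≤ postVarNoise κ xs νf n y := by
  exact (quad_nonneg hpsd hsymm hν.le _).trans_eq
    (postVar_eq_quad (hpsd n (fun j : Fin n => xs j)) hsymm hν).symm

lemma postVar_le_diag
    (hpsd : ∀ (m : ℕ) (z : Fin m → D), (Matrix.of fun i j => κ (z i) (z j)).PosSemidef)
    (hsymm : ∀ a b, κ a b = κ b a) {n : ℕ} {νf : D → ℝ} (hν : 0 < νf y) :
    postVarNoise κ xs νf n y ≤ κ y y := by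
  have := postVar_le_quad (xs := xs) (hpsd n _) hsymm hν (0 : Fin n → ℝ)
  simpa [quadQ] using this
end MatrixAux4

section Analytic

lemma exp_sub_one_le {a : ℝ} (h0 : 0 ≤ a) (h1 : a < 1) :
    Real.exp a - 1 ≤ a / (1 - a) := by
  have hpos : 0 < 1 - a := by linarith
  have h2 : 1 - a ≤ Real.exp (-a) := by have := Real.add_one_le_exp (-a); linarith
  have h3 : Real.exp a ≤ 1 / (1 - a) := by
    rw [le_div_iff₀ hpos]
    calc Real.exp a * (1 - a) ≤ Real.exp a * Real.exp (-a) :=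
          mul_le_mul_of_nonneg_left h2 (Real.exp_nonneg a)
      _ = 1 := by rw [← Real.exp_add]; simp
  have h4 : a / (1 - a) = 1 / (1 - a) - 1 := by field_simp; ring
  linarith

lemma log_ratio {u A : ℝ} (hu : 0 ≤ u) (huA : u ≤ A) (hA : 0 < A) :
    u * Real.log (1 + A) ≤ A * Real.log (1 + u) := by
  have hcc := strictConcaveOn_log_Ioi.concaveOn
  have h1 : (1 : ℝ) ∈ Set.Ioi (0:ℝ) := by norm_num
  have h2 : (1 + A : ℝ) ∈ Set.Ioi (0:ℝ) := by simp; linarith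
  have ha : (0:ℝ) ≤ 1 - u / A := by
    have : u / A ≤ 1 := (div_le_one hA).mpr huA
    linarith
  have hb : (0:ℝ) ≤ u / A := div_nonneg hu hA.le
  have hab : (1 - u / A) + u / A = 1 := by ring
  have := hcc.2 h1 h2 ha hb hab
  simp only [smul_eq_mul] at this
  have hx : (1 - u / A) * 1 + u / A * (1 + A) = 1 + u := by
    field_simp
    ring
  rw [hx, Real.log_one, mul_zero, zero_add] at this
  have := mul_le_mul_of_nonneg_left this hA.le
  calc u * Real.log (1 + A) = A * (u / A * Real.log (1 + A)) := by field_simp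
    _ ≤ A * Real.log (1 + u) := this
end Analytic


/-- Cumulative regret bound of DeltaBO: under (i) the confidence bound, (ii) the
UCB acquisition rule, (iii) the source information-gain bound `γ_g` with
`2γ_g < N`, and (iv) the difference information-gain bound `γ_δ`, the cumulative
regret `R_T = ∑_{t=1}^T (f(x*) − f(x_t))` satisfies
`R_T ≤ √(8 T β_T (T γ_g σ_0²/(N − 2γ_g) + C_2 γ_δ (2γ_g σ_0²/(N − 2γ_g) + σ²)))`.
Here the target query `x_t` of the paper is `xq (t-1)`. -/
theorem deltaBO_cumulative_regret {D : Type*} [Fintype D] [Nonempty D]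
    (k_g k_δ : D → D → ℝ)
    (hgsymm : ∀ a b : D, k_g a b = k_g b a)
    (hδsymm : ∀ a b : D, k_δ a b = k_δ b a)
    (hgpsd : ∀ (n : ℕ) (z : Fin n → D),
      (Matrix.of fun i j => k_g (z i) (z j)).PosSemidef)
    (hδpsd : ∀ (n : ℕ) (z : Fin n → D),
      (Matrix.of fun i j => k_δ (z i) (z j)).PosSemidef)
    (τ σ0 σ : ℝ) (hτ : 0 < τ) (hσ0 : 0 < σ0) (hσ : 0 < σ)
    (hkδbd : ∀ x : D, k_δ x x ≤ τ ^ 2)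
    (N T : ℕ) (x0 xq : ℕ → D)
    (f : D → ℝ) (xstar : D) (hstar : ∀ x : D, f x ≤ f xstar)
    (β : ℕ → ℝ) (hβpos : 0 < β 1)
    (hβmono : ∀ s t : ℕ, 1 ≤ s → s ≤ t → t ≤ T → β s ≤ β t)
    (m : ℕ → D → ℝ)
    -- (i) confidence bound
    (hconf : ∀ t : ℕ, 1 ≤ t → t ≤ T → ∀ x : D,
      |f x - m t x| ≤ Real.sqrt (β t) *
        Real.sqrt (sigmaG k_g x0 σ0 N x + sigmaD k_g k_δ x0 xq σ0 σ N (t - 1) x))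
    -- (ii) UCB acquisition rule: `xq (t-1)` maximizes the acquisition function
    (hmax : ∀ t : ℕ, 1 ≤ t → t ≤ T → ∀ x : D,
      m t x + Real.sqrt (β t) *
          Real.sqrt (sigmaG k_g x0 σ0 N x + sigmaD k_g k_δ x0 xq σ0 σ N (t - 1) x) ≤
        m t (xq (t - 1)) + Real.sqrt (β t) *
          Real.sqrt (sigmaG k_g x0 σ0 N (xq (t - 1)) +
            sigmaD k_g k_δ x0 xq σ0 σ N (t - 1) (xq (t - 1))))
    -- (iii) source information-gain bound
    (γg : ℝ) (hγg : 0 ≤ γg) (hγgN : 2 * γg < N)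
    (hgainG : ∀ x : D,
      ∑ i : Fin N, Real.log (1 + (σ0 ^ 2)⁻¹ * sigmaG k_g x0 σ0 i x) ≤ 2 * γg)
    -- (iv) difference information-gain bound
    (γδ : ℝ) (hγδ : 0 ≤ γδ)
    (hgainD : ∑ t ∈ Icc 1 T,
      Real.log (1 + sigmaD k_g k_δ x0 xq σ0 σ N (t - 1) (xq (t - 1)) /
        (sigmaG k_g x0 σ0 N (xq (t - 1)) + σ ^ 2)) ≤ 2 * γδ) :
    ∑ t ∈ Icc 1 T, (f xstar - f (xq (t - 1))) ≤
      Real.sqrt (8 * T * β T *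
        (T * γg * σ0 ^ 2 / (N - 2 * γg) +
          Ctwo σ τ * γδ * (2 * γg * σ0 ^ 2 / (N - 2 * γg) + σ ^ 2))) := by
  classical
  by_cases hT0 : T = 0
  · subst hT0
    simpa using Real.sqrt_nonneg _
  have hT1 : 1 ≤ T := Nat.one_le_iff_ne_zero.mpr hT0
  have hσ02 : (0:ℝ) < σ0 ^ 2 := by positivity
  have hσ2 : (0:ℝ) < σ ^ 2 := by positivity
  have hNpos : (0:ℝ) < (N:ℝ) := lt_of_le_of_lt (by linarith) hγgN
  have hden : (0:ℝ) < (N:ℝ) - 2 * γg := by linarith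
  set Bg : ℝ := 2 * γg * σ0 ^ 2 / ((N:ℝ) - 2 * γg) with hBg
  have hBgnn : 0 ≤ Bg := div_nonneg (by positivity) hden.le
  -- sigmaG basic facts
  have hgnn : ∀ (i : ℕ) (x : D), 0 ≤ sigmaG k_g x0 σ0 i x := fun i x =>
    postVar_nonneg (νf := fun _ => σ0 ^ 2) hgpsd hgsymm hσ02
  have hgmono : ∀ (x : D) (i : ℕ), i ≤ N → sigmaG k_g x0 σ0 N x ≤ sigmaG k_g x0 σ0 i x :=
    fun x i hi => postVar_mono hgpsd hgsymm hσ02 hi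
  -- bound on sigmaG N
  have hgN : ∀ x : D, sigmaG k_g x0 σ0 N x ≤ Bg := by
    intro x
    have hsnn : 0 ≤ sigmaG k_g x0 σ0 N x := hgnn N x
    have hinv : (0:ℝ) ≤ (σ0 ^ 2)⁻¹ := by positivity
    have h1pos : (0:ℝ) < 1 + (σ0 ^ 2)⁻¹ * sigmaG k_g x0 σ0 N x := by
      nlinarith [mul_nonneg hinv hsnn]
    have hlogle : (N:ℝ) * Real.log (1 + (σ0 ^ 2)⁻¹ * sigmaG k_g x0 σ0 N x) ≤ 2 * γg := by
      have hsum : (N:ℝ) * Real.log (1 + (σ0 ^ 2)⁻¹ * sigmaG k_g x0 σ0 N x)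
          = ∑ _i : Fin N, Real.log (1 + (σ0 ^ 2)⁻¹ * sigmaG k_g x0 σ0 N x) := by
        rw [Finset.sum_const, Finset.card_univ, Fintype.card_fin, nsmul_eq_mul]
      rw [hsum]
      refine le_trans (Finset.sum_le_sum fun i _ => ?_) (hgainG x)
      refine Real.log_le_log h1pos ?_
      have hmono := hgmono x i (le_of_lt i.isLt)
      nlinarith [mul_le_mul_of_nonneg_left hmono hinv]
    have ha : Real.log (1 + (σ0 ^ 2)⁻¹ * sigmaG k_g x0 σ0 N x) ≤ 2 * γg / N := by
      rw [le_div_iff₀ hNpos]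
      linarith
    have hb : 1 + (σ0 ^ 2)⁻¹ * sigmaG k_g x0 σ0 N x ≤ Real.exp (2 * γg / N) :=
      (Real.log_le_iff_le_exp h1pos).mp ha
    have haN : 2 * γg / (N:ℝ) < 1 := by rw [div_lt_one hNpos]; linarith
    have hc : (σ0 ^ 2)⁻¹ * sigmaG k_g x0 σ0 N x
        ≤ (2 * γg / N) / (1 - 2 * γg / N) := by
      have := exp_sub_one_le (a := 2 * γg / N) (by positivity) haN
      linarith
    have hd : (2 * γg / (N:ℝ)) / (1 - 2 * γg / (N:ℝ)) = 2 * γg / ((N:ℝ) - 2 * γg) := by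
      rw [div_eq_div_iff (by linarith [haN] : (0:ℝ) < 1 - 2 * γg / (N:ℝ)).ne' hden.ne']
      field_simp
    have he : sigmaG k_g x0 σ0 N x
        ≤ σ0 ^ 2 * (2 * γg / ((N:ℝ) - 2 * γg)) := by
      calc sigmaG k_g x0 σ0 N x
          = σ0 ^ 2 * ((σ0 ^ 2)⁻¹ * sigmaG k_g x0 σ0 N x) := by field_simp
        _ ≤ σ0 ^ 2 * (2 * γg / ((N:ℝ) - 2 * γg)) :=
            mul_le_mul_of_nonneg_left (hc.trans_eq hd) hσ02.le
    have : Bg = σ0 ^ 2 * (2 * γg / ((N:ℝ) - 2 * γg)) := by rw [hBg]; ring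
    linarith
  -- sigmaD basic facts
  have hνpos : ∀ x : D, 0 < sigmaG k_g x0 σ0 N x + σ ^ 2 := fun x =>
    add_pos_of_nonneg_of_pos (hgnn N x) hσ2
  have hdnn : ∀ (t : ℕ) (x : D), 0 ≤ sigmaD k_g k_δ x0 xq σ0 σ N t x := fun t x =>
    postVar_nonneg hδpsd hδsymm (hνpos x)
  have hdle : ∀ (t : ℕ) (x : D), sigmaD k_g k_δ x0 xq σ0 σ N t x ≤ τ ^ 2 := fun t x =>
    (postVar_le_diag hδpsd hδsymm (hνpos x)).trans (hkδbd x)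
  -- constants
  have hA : (0:ℝ) < τ ^ 2 / σ ^ 2 := by positivity
  have hlogA : 0 < Real.log (1 + τ ^ 2 / σ ^ 2) := Real.log_pos (by linarith)
  have hC2 : 0 ≤ Ctwo σ τ := le_of_lt (div_pos hA hlogA)
  -- per-step sigmaD bound
  have hkey : ∀ t ∈ Finset.Icc 1 T,
      sigmaD k_g k_δ x0 xq σ0 σ N (t - 1) (xq (t - 1))
        ≤ Ctwo σ τ * (Bg + σ ^ 2) *
          Real.log (1 + sigmaD k_g k_δ x0 xq σ0 σ N (t - 1) (xq (t - 1)) /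
            (sigmaG k_g x0 σ0 N (xq (t - 1)) + σ ^ 2)) := by
    intro t _
    set s := sigmaD k_g k_δ x0 xq σ0 σ N (t - 1) (xq (t - 1)) with hs
    set ν := sigmaG k_g x0 σ0 N (xq (t - 1)) + σ ^ 2 with hν
    have hνp : 0 < ν := hνpos _
    have hsnn : 0 ≤ s := hdnn _ _
    have hsτ : s ≤ τ ^ 2 := hdle _ _
    have hu : 0 ≤ s / ν := div_nonneg hsnn hνp.le
    have hσν : σ ^ 2 ≤ ν := by rw [hν]; linarith [hgnn N (xq (t - 1))]
    have huA : s / ν ≤ τ ^ 2 / σ ^ 2 := div_le_div₀ (by positivity) hsτ hσ2 hσν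
    have hlr := log_ratio hu huA hA
    have hlognn : 0 ≤ Real.log (1 + s / ν) := Real.log_nonneg (by linarith)
    have hsu : s = s / ν * ν := by field_simp
    have h1 : s ≤ Ctwo σ τ * ν * Real.log (1 + s / ν) := by
      rw [Ctwo, div_mul_eq_mul_div, div_mul_eq_mul_div, le_div_iff₀ hlogA]
      calc s * Real.log (1 + τ ^ 2 / σ ^ 2)
          = (s / ν * Real.log (1 + τ ^ 2 / σ ^ 2)) * ν := by
              rw [div_mul_eq_mul_div, div_mul_cancel₀ _ hνp.ne']
        _ ≤ (τ ^ 2 / σ ^ 2 * Real.log (1 + s / ν)) * ν :=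
            mul_le_mul_of_nonneg_right hlr hνp.le
        _ = τ ^ 2 / σ ^ 2 * ν * Real.log (1 + s / ν) := by ring
    have hνB : ν ≤ Bg + σ ^ 2 := by rw [hν]; linarith [hgN (xq (t - 1))]
    calc s ≤ Ctwo σ τ * ν * Real.log (1 + s / ν) := h1
      _ ≤ Ctwo σ τ * (Bg + σ ^ 2) * Real.log (1 + s / ν) := by
          have := mul_le_mul_of_nonneg_left hνB hC2
          exact mul_le_mul_of_nonneg_right (by linarith) hlognn
  -- sum of sigmaD
  have hsumD : ∑ t ∈ Finset.Icc 1 T, sigmaD k_g k_δ x0 xq σ0 σ N (t - 1) (xq (t - 1))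
      ≤ Ctwo σ τ * (Bg + σ ^ 2) * (2 * γδ) := by
    refine le_trans (Finset.sum_le_sum hkey) ?_
    rw [← Finset.mul_sum]
    exact mul_le_mul_of_nonneg_left hgainD (mul_nonneg hC2 (by positivity))
  -- sum of variances
  set S' : ℝ := (T:ℝ) * Bg + Ctwo σ τ * (Bg + σ ^ 2) * (2 * γδ) with hS'
  have hvnn : ∀ t : ℕ, 0 ≤ sigmaG k_g x0 σ0 N (xq (t - 1)) +
      sigmaD k_g k_δ x0 xq σ0 σ N (t - 1) (xq (t - 1)) :=
    fun t => add_nonneg (hgnn _ _) (hdnn _ _)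
  have hcard : ((Finset.Icc 1 T).card : ℝ) = (T:ℝ) := by
    rw [Nat.card_Icc]; simp
  have hvsum : ∑ t ∈ Finset.Icc 1 T, (sigmaG k_g x0 σ0 N (xq (t - 1)) +
      sigmaD k_g k_δ x0 xq σ0 σ N (t - 1) (xq (t - 1))) ≤ S' := by
    rw [Finset.sum_add_distrib, hS']
    have h1 : ∑ t ∈ Finset.Icc 1 T, sigmaG k_g x0 σ0 N (xq (t - 1)) ≤ (T:ℝ) * Bg := by
      calc ∑ t ∈ Finset.Icc 1 T, sigmaG k_g x0 σ0 N (xq (t - 1))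
          ≤ ∑ _t ∈ Finset.Icc 1 T, Bg := Finset.sum_le_sum fun t _ => hgN _
        _ = (T:ℝ) * Bg := by rw [Finset.sum_const, nsmul_eq_mul, hcard]
    linarith [hsumD]
  have hS'nn : 0 ≤ S' :=
    le_trans (Finset.sum_nonneg fun t _ => hvnn t) hvsum
  -- per-step regret bound
  have hβT : 0 < β T := lt_of_lt_of_le hβpos (hβmono 1 T le_rfl hT1 le_rfl)
  have hreg : ∀ t ∈ Finset.Icc 1 T, f xstar - f (xq (t - 1))
      ≤ 2 * Real.sqrt (β T) * Real.sqrt (sigmaG k_g x0 σ0 N (xq (t - 1)) +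
        sigmaD k_g k_δ x0 xq σ0 σ N (t - 1) (xq (t - 1))) := by
    intro t ht
    obtain ⟨ht1, ht2⟩ := Finset.mem_Icc.mp ht
    have hc1 := abs_le.mp (hconf t ht1 ht2 xstar)
    have hc2 := abs_le.mp (hconf t ht1 ht2 (xq (t - 1)))
    have hm := hmax t ht1 ht2 xstar
    have hβt : Real.sqrt (β t) ≤ Real.sqrt (β T) :=
      Real.sqrt_le_sqrt (hβmono t T ht1 ht2 le_rfl)
    have hsq : 0 ≤ Real.sqrt (sigmaG k_g x0 σ0 N (xq (t - 1)) +
        sigmaD k_g k_δ x0 xq σ0 σ N (t - 1) (xq (t - 1))) := Real.sqrt_nonneg _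
    linarith [hc1.2, hc2.1, hm, mul_le_mul_of_nonneg_right hβt hsq]
  -- assemble
  have hsqnn : 0 ≤ ∑ t ∈ Finset.Icc 1 T, Real.sqrt (sigmaG k_g x0 σ0 N (xq (t - 1)) +
      sigmaD k_g k_δ x0 xq σ0 σ N (t - 1) (xq (t - 1))) :=
    Finset.sum_nonneg fun t _ => Real.sqrt_nonneg _
  have hCS : (∑ t ∈ Finset.Icc 1 T, Real.sqrt (sigmaG k_g x0 σ0 N (xq (t - 1)) +
      sigmaD k_g k_δ x0 xq σ0 σ N (t - 1) (xq (t - 1)))) ^ 2 ≤ (T:ℝ) * S' := by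
    calc (∑ t ∈ Finset.Icc 1 T, Real.sqrt (sigmaG k_g x0 σ0 N (xq (t - 1)) +
          sigmaD k_g k_δ x0 xq σ0 σ N (t - 1) (xq (t - 1)))) ^ 2
        ≤ ((Finset.Icc 1 T).card : ℝ) * ∑ t ∈ Finset.Icc 1 T,
            Real.sqrt (sigmaG k_g x0 σ0 N (xq (t - 1)) +
              sigmaD k_g k_δ x0 xq σ0 σ N (t - 1) (xq (t - 1))) ^ 2 :=
          sq_sum_le_card_mul_sum_sq
      _ = (T:ℝ) * ∑ t ∈ Finset.Icc 1 T, (sigmaG k_g x0 σ0 N (xq (t - 1)) +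
            sigmaD k_g k_δ x0 xq σ0 σ N (t - 1) (xq (t - 1))) := by
          rw [hcard]
          congr 1
          exact Finset.sum_congr rfl fun t _ => Real.sq_sqrt (hvnn t)
      _ ≤ (T:ℝ) * S' := mul_le_mul_of_nonneg_left hvsum (by positivity)
  have hsqsum : ∑ t ∈ Finset.Icc 1 T, Real.sqrt (sigmaG k_g x0 σ0 N (xq (t - 1)) +
      sigmaD k_g k_δ x0 xq σ0 σ N (t - 1) (xq (t - 1))) ≤ Real.sqrt ((T:ℝ) * S') :=
    (Real.le_sqrt hsqnn (by positivity)).mpr hCS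
  have hfinal : 2 * Real.sqrt (β T) * Real.sqrt ((T:ℝ) * S')
      = Real.sqrt (4 * β T * ((T:ℝ) * S')) := by
    have h4βT : (0:ℝ) ≤ 4 * β T := by linarith
    rw [Real.sqrt_mul h4βT, Real.sqrt_mul (by norm_num : (0:ℝ) ≤ 4) (β T),
      show Real.sqrt 4 = 2 by
        rw [show (4:ℝ) = 2 ^ 2 by norm_num, Real.sqrt_sq (by norm_num : (0:ℝ) ≤ 2)]]
  have hgoal : 4 * β T * ((T:ℝ) * S') = 8 * T * β T *
      (T * γg * σ0 ^ 2 / (N - 2 * γg) +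
        Ctwo σ τ * γδ * (2 * γg * σ0 ^ 2 / (N - 2 * γg) + σ ^ 2)) := by
    rw [hS', hBg]; ring
  calc ∑ t ∈ Finset.Icc 1 T, (f xstar - f (xq (t - 1)))
      ≤ ∑ t ∈ Finset.Icc 1 T, 2 * Real.sqrt (β T) *
          Real.sqrt (sigmaG k_g x0 σ0 N (xq (t - 1)) +
            sigmaD k_g k_δ x0 xq σ0 σ N (t - 1) (xq (t - 1))) :=
        Finset.sum_le_sum hreg
    _ = 2 * Real.sqrt (β T) * ∑ t ∈ Finset.Icc 1 T,
          Real.sqrt (sigmaG k_g x0 σ0 N (xq (t - 1)) +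
            sigmaD k_g k_δ x0 xq σ0 σ N (t - 1) (xq (t - 1))) :=
        (Finset.mul_sum _ _ _).symm
    _ ≤ 2 * Real.sqrt (β T) * Real.sqrt ((T:ℝ) * S') :=
        mul_le_mul_of_nonneg_left hsqsum (by positivity)
    _ = Real.sqrt (4 * β T * ((T:ℝ) * S')) := hfinal
    _ = _ := by rw [hgoal]
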